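/- For an indexed tree T with support equal to {1,...,n-1}, the forest polynomial β_T equals the sum over decreasing labelings ℓ of T (read in inorder as a permutation of S_{n-1}) of the monomial ∏_{i=1}^{n-1} x_{c_i + 1}, where (c_1,...,c_{n-1}) is the Lehmer code of ℓ^{-1}. -/

import Mathlib

/-- Plane binary trees. `leaf` is a leaf, `node l r` an internal node. -/
inductive BT where
  | leaf : BT
  | node : BT → BT → BT
deriving DecidableEq

/-- Number of internal nodes. -/
def BT.size : BT → ℕ
  | .leaf => 0
  | .node l r => l.size + r.size + 1

/-- Multiset of values `ρ_F(v)` (canonical label of the leftmost descendant,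
reached by following left edges) over the internal nodes of a tree whose
inorder canonical labels start at `a`. -/
def BT.rhoMS : BT → ℤ → Multiset ℤ
  | .leaf, _ => 0
  | .node l r, a => a ::ₘ (l.rhoMS a + r.rhoMS (a + l.size + 1))

/-- Multiset of canonical labels of internal nodes whose left child is a leaf
("left support"). -/
def BT.lsuppMS : BT → ℤ → Multiset ℤ
  | .leaf, _ => 0
  | .node l r, a =>
      (if l = BT.leaf then ({a} : Multiset ℤ) else 0) + l.lsuppMS a
        + r.lsuppMS (a + l.size + 1)

/-- The flagged generating polynomial of a binary tree with inorder labels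
starting at `a`, where every label is at least `lo` (lower bound transmitted
from the parent), at most the `ρ`-value of the node, labels weakly increase
down left edges and strictly increase down right edges. The variables are
`x_1, x_2, …` (the variable `X 0` is unused). -/
noncomputable def BT.polyAux : BT → ℤ → ℕ → MvPolynomial ℕ ℚ
  | .leaf, _, _ => 1
  | .node l r, a, lo =>
      ∑ k ∈ Finset.Icc lo a.toNat,
        MvPolynomial.X k * l.polyAux a k * r.polyAux (a + l.size + 1) (k + 1)

/-- The forest polynomial of a single indexed tree with support starting at `a`. -/
noncomputable def BT.poly (t : BT) (a : ℤ) : MvPolynomial ℕ ℚ := t.polyAux a 1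

/-- An indexed forest: a list of binary trees together with the starting points
of their supports, the supports being maximal intervals (consecutive supports
leave a gap of at least one integer). -/
structure IndexedForest where
  trees : List (ℤ × BT)
  nonempty : ∀ p ∈ trees, p.2 ≠ BT.leaf
  gaps : trees.Chain' (fun p q => p.1 + (p.2.size : ℤ) + 1 ≤ q.1)

/-- The support of an indexed forest, as a set of integers. -/
def IndexedForest.Supp (F : IndexedForest) : Set ℤ :=
  {i | ∃ p ∈ F.trees, p.1 ≤ i ∧ i < p.1 + (p.2.size : ℤ)}

/-- The multiset of `ρ_F`-values of all internal nodes of `F`. -/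
def IndexedForest.rhoMS (F : IndexedForest) : Multiset ℤ :=
  (F.trees.map (fun p => p.2.rhoMS p.1)).sum

/-- The `ℕ`-vector `c(F)`: `c_i` counts internal nodes with `ρ_F`-value `i`. -/
def cOf (F : IndexedForest) : ℤ → ℕ := fun i => F.rhoMS.count i

/-- The multiset of left-support labels of `F`. -/
def IndexedForest.lsuppMS (F : IndexedForest) : Multiset ℤ :=
  (F.trees.map (fun p => p.2.lsuppMS p.1)).sum

/-- Forest polynomial of a list of located trees. -/
noncomputable def polyL (ts : List (ℤ × BT)) : MvPolynomial ℕ ℚ :=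
  (ts.map (fun p => p.2.poly p.1)).prod

/-- The forest polynomial of an indexed forest. -/
noncomputable def IndexedForest.poly (F : IndexedForest) : MvPolynomial ℕ ℚ :=
  polyL F.trees

/-- Number of internal nodes of a forest. -/
def IndexedForest.size (F : IndexedForest) : ℕ :=
  (F.trees.map (fun p => p.2.size)).sum

/-- Generic labeled plane binary trees: internal nodes carry a label in `α`. -/
inductive GT (α : Type) where
  | leaf : GT α
  | node : α → GT α → GT α → GT α
deriving DecidableEq

/-- Underlying (unlabeled) shape. -/
def GT.shape {α : Type} : GT α → BT
  | .leaf => BT.leaf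
  | .node _ l r => BT.node l.shape r.shape

/-- Number of internal nodes. -/
def GT.size {α : Type} : GT α → ℕ
  | .leaf => 0
  | .node _ l r => l.size + r.size + 1

/-- Multiset of labels of internal nodes. -/
def GT.labels {α : Type} : GT α → Multiset α
  | .leaf => 0
  | .node k l r => k ::ₘ (l.labels + r.labels)

/-- Relabel a labeled tree. -/
def GT.map {α β : Type} (f : α → β) : GT α → GT β
  | .leaf => .leaf
  | .node k l r => .node (f k) (l.map f) (r.map f)

/-- The root label of a labeled tree (if any) is smaller than `k`. -/
def rootBelow (k : ℕ) : GT ℕ → Prop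
  | .leaf => True
  | .node m _ _ => m < k

/-- A decreasing labeling: labels strictly decrease away from the root. -/
def IsDec : GT ℕ → Prop
  | .leaf => True
  | .node k l r => rootBelow k l ∧ rootBelow k r ∧ IsDec l ∧ IsDec r

/-- Inorder reading of the labels of a labeled tree. -/
def GT.inorder {α : Type} : GT α → List α
  | .leaf => []
  | .node k l r => l.inorder ++ k :: r.inorder

/-- For a decreasing labeling `L` of a tree with support `{1,…,n-1}`, read in
inorder as the one-line notation of a permutation `ℓ ∈ S_{n-1}`, this is the
`i`-th entry of the Lehmer code of `ℓ⁻¹`: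
`c_i = #{j > i : ℓ⁻¹(i) > ℓ⁻¹(j)}`, where `ℓ⁻¹(i)` is the (1-based) position of
the value `i` in the inorder word. -/
def codeInv (L : GT ℕ) (n i : ℕ) : ℕ :=
  ((Finset.Ioc i (n - 1)).filter
    (fun j => L.inorder.idxOf j < L.inorder.idxOf i)).card

-- ===== new material =====

def rem : BT → List (ℕ × BT)
  | .leaf => []
  | .node l r =>
      if l = BT.leaf ∧ r = BT.leaf then [(0, BT.leaf)]
      else
        (rem l).map (fun p => (p.1, BT.node p.2 r)) ++
        (rem r).map (fun p => (p.1 + l.size + 1, BT.node l p.2))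

lemma rem_size : ∀ {t : BT} {p : ℕ × BT}, p ∈ rem t → p.2.size + 1 = t.size := by
  intro t
  induction t with
  | leaf => intro p h; simp [rem] at h
  | node l r ihl ihr =>
    intro p h
    rw [rem] at h
    by_cases hc : l = BT.leaf ∧ r = BT.leaf
    · rw [if_pos hc] at h
      obtain ⟨rfl, rfl⟩ := hc
      simp at h; subst h; simp [BT.size]
    · rw [if_neg hc] at h
      simp only [List.mem_append, List.mem_map] at h
      rcases h with ⟨q, hq, rfl⟩ | ⟨q, hq, rfl⟩
      · have := ihl hq; simp [BT.size] at *; omega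
      · have := ihr hq; simp [BT.size] at *; omega

lemma rem_lt : ∀ {t : BT} {p : ℕ × BT}, p ∈ rem t → p.1 < t.size := by
  intro t
  induction t with
  | leaf => intro p h; simp [rem] at h
  | node l r ihl ihr =>
    intro p h
    rw [rem] at h
    by_cases hc : l = BT.leaf ∧ r = BT.leaf
    · rw [if_pos hc] at h
      simp at h; subst h; simp [BT.size]
    · rw [if_neg hc] at h
      simp only [List.mem_append, List.mem_map] at h
      rcases h with ⟨q, hq, rfl⟩ | ⟨q, hq, rfl⟩
      · have := ihl hq; simp [BT.size]; omega
      · have := ihr hq; simp [BT.size]; omega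

lemma polyAux_zero (l r : BT) (a : ℤ) (lo : ℕ) (h : a.toNat < lo) :
    (BT.node l r).polyAux a lo = 0 := by
  rw [BT.polyAux, Finset.Icc_eq_empty (by omega), Finset.sum_empty]

lemma sum_finset_list {α : Type} (s : Finset ℕ) (l : List α)
    (F : ℕ → α → MvPolynomial ℕ ℚ) :
    ∑ k ∈ s, (l.map (F k)).sum = (l.map (fun x => ∑ k ∈ s, F k x)).sum := by
  induction l with
  | nil => simp
  | cons a l ih => simp [Finset.sum_add_distrib, ih]

open MvPolynomial Finset in
lemma lemA : ∀ (t : BT) (a : ℤ) (lo : ℕ), 1 ≤ lo → (lo : ℤ) ≤ a →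
    t.polyAux a lo =
      ((rem t).map (fun p => MvPolynomial.X (a.toNat + p.1) * p.2.polyAux a lo)).sum
        + t.polyAux (a - 1) lo := by
  intro t
  induction t with
  | leaf => intro a lo h1 h2; simp [rem, BT.polyAux]
  | node l r ihl ihr =>
    intro a lo h1 h2
    have ha1 : (1:ℤ) ≤ a := le_trans (by exact_mod_cast h1) h2
    have hloA : lo ≤ a.toNat := by omega
    by_cases hc : l = BT.leaf ∧ r = BT.leaf
    · obtain ⟨rfl, rfl⟩ := hc
      rw [rem, if_pos ⟨rfl, rfl⟩]
      simp only [BT.polyAux, mul_one, List.map_cons, List.map_nil, List.sum_cons,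
        List.sum_nil, add_zero]
      rw [show a.toNat = (a-1).toNat + 1 from by omega,
        Finset.sum_Icc_succ_top (by omega)]
      ring
    · rw [rem, if_neg hc]
      set A := a.toNat with hAdef
      have hAa : (A : ℤ) = a := by omega
      set ls := l.size with hls
      -- abbreviations
      have key_r : ∀ k ∈ Finset.Icc lo A,
          BT.polyAux r (a + ls + 1) (k+1) =
            ((rem r).map (fun p =>
              MvPolynomial.X ((a + ls + 1).toNat + p.1) * p.2.polyAux (a + ls + 1) (k+1))).sum
              + BT.polyAux r (a + ls) (k+1) := by
        intro k hk
        simp only [Finset.mem_Icc] at hk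
        have := ihr (a + ls + 1) (k+1) (by omega) (by push_cast; omega)
        rwa [show (a + (ls:ℤ) + 1) - 1 = a + ls from by ring] at this
      have key_l : ∀ k ∈ Finset.Icc lo A,
          BT.polyAux l a k =
            ((rem l).map (fun p =>
              MvPolynomial.X (A + p.1) * p.2.polyAux a k)).sum + BT.polyAux l (a-1) k := by
        intro k hk
        simp only [Finset.mem_Icc] at hk
        exact ihl a k (by omega) (by push_cast; omega)
      have expand : (BT.node l r).polyAux a lo
          = ∑ k ∈ Finset.Icc lo A,
              (MvPolynomial.X k * BT.polyAux l a k *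
                ((rem r).map (fun p =>
                  MvPolynomial.X ((a + ls + 1).toNat + p.1) * p.2.polyAux (a + ls + 1) (k+1))).sum
              + (MvPolynomial.X k *
                  ((rem l).map (fun p =>
                    MvPolynomial.X (A + p.1) * p.2.polyAux a k)).sum * BT.polyAux r (a + ls) (k+1)
                + MvPolynomial.X k * BT.polyAux l (a-1) k * BT.polyAux r (a + ls) (k+1))) := by
        rw [BT.polyAux]
        refine Finset.sum_congr rfl (fun k hk => ?_)
        rw [key_r k hk, key_l k hk]
        ring
      rw [expand, Finset.sum_add_distrib, Finset.sum_add_distrib]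
      -- Term1
      have T1 : ∑ k ∈ Finset.Icc lo A,
          MvPolynomial.X k * BT.polyAux l a k *
            ((rem r).map (fun p =>
              MvPolynomial.X ((a + ls + 1).toNat + p.1) * p.2.polyAux (a + ls + 1) (k+1))).sum
          = ((rem r).map (fun p =>
              MvPolynomial.X (A + (p.1 + ls + 1)) * (BT.node l p.2).polyAux a lo)).sum := by
        have swap : ∀ k, MvPolynomial.X k * BT.polyAux l a k *
            ((rem r).map (fun p =>
              MvPolynomial.X ((a + ls + 1).toNat + p.1) * p.2.polyAux (a + ls + 1) (k+1))).sum
            = ((rem r).map (fun p =>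
                MvPolynomial.X k * BT.polyAux l a k *
                  (MvPolynomial.X ((a + ls + 1).toNat + p.1) * p.2.polyAux (a + ls + 1) (k+1)))).sum := by
          intro k
          rw [List.sum_map_mul_left]
        simp only [swap]
        rw [sum_finset_list]
        refine congrArg List.sum (List.map_congr_left (fun p hp => ?_))
        rw [BT.polyAux, Finset.mul_sum]
        refine Finset.sum_congr rfl (fun k hk => ?_)
        rw [show (a + (ls:ℤ) + 1).toNat + p.1 = A + (p.1 + ls + 1) from by omega]
        ring
      -- Term2a
      have T2a : ∑ k ∈ Finset.Icc lo A,
          MvPolynomial.X k *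
            ((rem l).map (fun p =>
              MvPolynomial.X (A + p.1) * p.2.polyAux a k)).sum * BT.polyAux r (a + ls) (k+1)
          = ((rem l).map (fun p =>
              MvPolynomial.X (A + p.1) * (BT.node p.2 r).polyAux a lo)).sum := by
        have swap : ∀ k, MvPolynomial.X k *
            ((rem l).map (fun p =>
              MvPolynomial.X (A + p.1) * p.2.polyAux a k)).sum * BT.polyAux r (a + ls) (k+1)
            = ((rem l).map (fun p =>
                MvPolynomial.X (A + p.1) *
                  (MvPolynomial.X k * p.2.polyAux a k * BT.polyAux r (a + ls) (k+1)))).sum := by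
          intro k
          rw [← List.sum_map_mul_left, ← List.sum_map_mul_right]
          refine congrArg List.sum (List.map_congr_left (fun p _ => by ring))
        simp only [swap]
        rw [sum_finset_list]
        refine congrArg List.sum (List.map_congr_left (fun p hp => ?_))
        rw [BT.polyAux, Finset.mul_sum]
        have hsz : ((p.2.size : ℤ)) + 1 = ls := by
          have h := rem_size hp; rw [hls]; exact_mod_cast h
        rw [show a + (p.2.size : ℤ) + 1 = a + ls from by omega]
      -- Term2b
      have hz : MvPolynomial.X ((a-1).toNat + 1) * BT.polyAux l (a-1) ((a-1).toNat + 1) *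
          BT.polyAux r (a + ls) ((a-1).toNat + 1 + 1) = 0 := by
        by_cases hl : l = BT.leaf
        · have hr : r ≠ BT.leaf := fun h => hc ⟨hl, h⟩
          obtain ⟨r1, r2, rfl⟩ : ∃ r1 r2, r = BT.node r1 r2 := by
            cases r with
            | leaf => exact absurd rfl hr
            | node r1 r2 => exact ⟨r1, r2, rfl⟩
          have hls0 : ls = 0 := by rw [hls, hl]; rfl
          rw [polyAux_zero r1 r2 (a + ls) ((a-1).toNat + 1 + 1) (by rw [hls0]; push_cast; omega)]
          ring
        · obtain ⟨l1, l2, rfl⟩ : ∃ l1 l2, l = BT.node l1 l2 := by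
            cases l with
            | leaf => exact absurd rfl hl
            | node l1 l2 => exact ⟨l1, l2, rfl⟩
          rw [polyAux_zero l1 l2 (a-1) ((a-1).toNat + 1) (by omega)]
          ring
      have T2b : ∑ k ∈ Finset.Icc lo A,
          MvPolynomial.X k * BT.polyAux l (a-1) k * BT.polyAux r (a + ls) (k+1)
          = (BT.node l r).polyAux (a-1) lo := by
        rw [BT.polyAux]
        rw [show (a - 1) + (ls:ℤ) + 1 = a + ls from by ring]
        rw [show A = (a-1).toNat + 1 from by omega, Finset.sum_Icc_succ_top (by omega), hz,
          add_zero]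
      rw [T1, T2a, T2b]
      simp only [List.map_append, List.sum_append, List.map_map, Function.comp_def]
      ring
-- ===== GT basics =====

instance instDecRootBelow (k : ℕ) : (L : GT ℕ) → Decidable (rootBelow k L)
  | .leaf => isTrue trivial
  | .node m _ _ => inferInstanceAs (Decidable (m < k))

instance instDecIsDec : (L : GT ℕ) → Decidable (IsDec L)
  | .leaf => isTrue trivial
  | .node k l r =>
      haveI := instDecIsDec l
      haveI := instDecIsDec r
      inferInstanceAs (Decidable (rootBelow k l ∧ rootBelow k r ∧ IsDec l ∧ IsDec r))

lemma inorder_coe : ∀ L : GT ℕ, (L.inorder : Multiset ℕ) = L.labels := by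
  intro L
  induction L with
  | leaf => rfl
  | node k l r ihl ihr =>
    simp [GT.inorder, GT.labels, ← ihl, ← ihr]

lemma inorder_length (L : GT ℕ) : L.inorder.length = Multiset.card L.labels := by
  rw [← inorder_coe]; rfl

lemma shape_leaf_iff {L : GT ℕ} : L.shape = BT.leaf ↔ L = .leaf := by
  cases L <;> simp [GT.shape]

lemma shape_map (f : ℕ → ℕ) : ∀ L : GT ℕ, (L.map f).shape = L.shape := by
  intro L
  induction L with
  | leaf => rfl
  | node k l r ihl ihr => simp [GT.map, GT.shape, ihl, ihr]

lemma labels_map (f : ℕ → ℕ) : ∀ L : GT ℕ, (L.map f).labels = L.labels.map f := by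
  intro L
  induction L with
  | leaf => rfl
  | node k l r ihl ihr => simp [GT.map, GT.labels, ihl, ihr]

lemma inorder_map (f : ℕ → ℕ) : ∀ L : GT ℕ, (L.map f).inorder = L.inorder.map f := by
  intro L
  induction L with
  | leaf => rfl
  | node k l r ihl ihr => simp [GT.map, GT.inorder, ihl, ihr]

lemma gtmap_map (f g : ℕ → ℕ) : ∀ L : GT ℕ, (L.map f).map g = L.map (g ∘ f) := by
  intro L
  induction L with
  | leaf => rfl
  | node k l r ihl ihr => simp [GT.map, ihl, ihr]


lemma gtmap_congr_id (f : ℕ → ℕ) : ∀ L : GT ℕ, (∀ x ∈ L.labels, f x = x) → L.map f = L := by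
  intro L
  induction L with
  | leaf => intro _; rfl
  | node k l r ihl ihr =>
    intro h
    simp only [GT.labels, Multiset.mem_cons, Multiset.mem_add] at h
    simp [GT.map, ihl (fun x hx => h x (Or.inr (Or.inl hx))),
      ihr (fun x hx => h x (Or.inr (Or.inr hx))), h k (Or.inl rfl)]

def allGT : BT → ℕ → Finset (GT ℕ)
  | .leaf, _ => {GT.leaf}
  | .node l r, N =>
      ((Finset.range N) ×ˢ (allGT l N ×ˢ allGT r N)).image
        (fun p => GT.node p.1 p.2.1 p.2.2)

lemma mem_allGT : ∀ (t : BT) (N : ℕ) (L : GT ℕ),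
    L ∈ allGT t N ↔ (L.shape = t ∧ ∀ x ∈ L.labels, x < N) := by
  intro t
  induction t with
  | leaf =>
    intro N L
    cases L with
    | leaf => simp [allGT, GT.shape, GT.labels]
    | node k l r => simp [allGT, GT.shape, GT.labels]
  | node tl tr ihl ihr =>
    intro N L
    cases L with
    | leaf => simp [allGT, GT.shape]
    | node k l r =>
      simp only [allGT, Finset.mem_image, Finset.mem_product, Finset.mem_range, GT.shape,
        GT.labels, Multiset.mem_cons, Multiset.mem_add, BT.node.injEq]
      constructor
      · rintro ⟨⟨a, b, c⟩, ⟨ha, hb, hc⟩, heq⟩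
        cases heq
        rw [ihl, ihr] at *
        refine ⟨⟨hb.1, hc.1⟩, ?_⟩
        rintro x (rfl | hx | hx)
        · exact ha
        · exact hb.2 x hx
        · exact hc.2 x hx
      · rintro ⟨⟨hl, hr⟩, hx⟩
        refine ⟨⟨k, l, r⟩, ⟨hx k (Or.inl rfl), ?_, ?_⟩, rfl⟩
        · exact (ihl N l).mpr ⟨hl, fun x h => hx x (Or.inr (Or.inl h))⟩
        · exact (ihr N r).mpr ⟨hr, fun x h => hx x (Or.inr (Or.inr h))⟩
-- ===== deletion and insertion =====

def del1 : GT ℕ → GT ℕ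
  | .leaf => .leaf
  | .node k a b => if k = 1 then .leaf else .node k (del1 a) (del1 b)

def ins : BT → ℕ → GT ℕ → GT ℕ
  | .leaf, _, _ => .leaf
  | .node l r, i, M =>
      if i < l.size then
        match M with
        | .node k A B => .node k (ins l i A) B
        | .leaf => .leaf
      else if i = l.size then .node 1 .leaf .leaf
      else
        match M with
        | .node k A B => .node k A (ins r (i - l.size - 1) B)
        | .leaf => .leaf

lemma inorder_length_shape : ∀ L : GT ℕ, L.inorder.length = L.shape.size := by
  intro L
  induction L with
  | leaf => rfl
  | node k l r ihl ihr => simp [GT.inorder, GT.shape, BT.size, ihl, ihr]; omega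

lemma del1_id : ∀ L : GT ℕ, 1 ∉ L.labels → del1 L = L := by
  intro L
  induction L with
  | leaf => intro _; rfl
  | node k a b iha ihb =>
    intro h
    simp only [GT.labels, Multiset.mem_cons, Multiset.mem_add, not_or] at h
    rw [del1, if_neg (fun hk => h.1 hk.symm), iha h.2.1, ihb h.2.2]

lemma rootBelow_del1 {k : ℕ} {L : GT ℕ} (h : rootBelow k L) : rootBelow k (del1 L) := by
  cases L with
  | leaf => trivial
  | node m a b =>
    rw [del1]
    split
    · trivial
    · exact h

lemma del1_main : ∀ L : GT ℕ, IsDec L → (∀ x ∈ L.labels, 1 ≤ x) →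
    L.labels.count 1 = 1 →
    (L.inorder.idxOf 1, (del1 L).shape) ∈ rem L.shape
    ∧ (del1 L).labels = L.labels.erase 1
    ∧ (del1 L).inorder = L.inorder.erase 1
    ∧ IsDec (del1 L)
    ∧ ins L.shape (L.inorder.idxOf 1) (del1 L) = L := by
  intro L
  induction L with
  | leaf => intro _ _ hcount; simp [GT.labels] at hcount
  | node k a b iha ihb =>
    intro hdec hpos hcount
    obtain ⟨hra, hrb, hda, hdb⟩ := hdec
    have hposa : ∀ x ∈ a.labels, 1 ≤ x := fun x hx => hpos x (by
      simp [GT.labels]; tauto)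
    have hposb : ∀ x ∈ b.labels, 1 ≤ x := fun x hx => hpos x (by
      simp [GT.labels]; tauto)
    by_cases hk : k = 1
    · subst hk
      -- children are leaves
      have ha : a = GT.leaf := by
        cases a with
        | leaf => rfl
        | node m x y =>
          exact absurd hra (by simp [rootBelow]; have := hposa m (by simp [GT.labels]); omega)
      have hb : b = GT.leaf := by
        cases b with
        | leaf => rfl
        | node m x y =>
          exact absurd hrb (by simp [rootBelow]; have := hposb m (by simp [GT.labels]); omega)
      subst ha; subst hb
      refine ⟨?_, ?_, ?_, ?_, ?_⟩
      · simp [GT.inorder, GT.shape, del1, rem]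
      · simp [GT.labels, del1]
      · simp [GT.inorder, del1]
      · simp [del1, IsDec]
      · simp [GT.inorder, GT.shape, del1, ins, BT.size]
    · rw [del1, if_neg hk]
      have hne1k : ¬(1 = k) := fun h => hk h.symm
      have hcnt : a.labels.count 1 + b.labels.count 1 = 1 := by
        simp [GT.labels, Multiset.count_cons, hne1k] at hcount
        omega
      have hk1 : (1:ℕ) ∈ GT.labels (GT.node k a b) := by
        rw [← Multiset.count_pos]; omega
      by_cases hmem : a.labels.count 1 = 1
      · -- the label 1 is in the left subtree
        have hnb : (1:ℕ) ∉ b.labels := Multiset.count_eq_zero.mp (by omega)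
        have hna : (1:ℕ) ∈ a.labels := by rw [← Multiset.count_pos]; omega
        have hina : (1:ℕ) ∈ a.inorder := by rw [← Multiset.mem_coe, inorder_coe]; exact hna
        obtain ⟨m1, m2, m3, m4, m5⟩ := iha hda hposa hmem
        have hdb' : del1 b = b := del1_id b hnb
        rw [hdb']
        have hio : (GT.node k a b).inorder.idxOf 1 = a.inorder.idxOf 1 := by
          rw [GT.inorder, List.idxOf_append_of_mem hina]
        have hashape : a.shape ≠ BT.leaf := by
          cases a with
          | leaf => simp [GT.labels] at hna
          | node _ _ _ => simp [GT.shape]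
        refine ⟨?_, ?_, ?_, ?_, ?_⟩
        · rw [hio]
          show _ ∈ rem (BT.node a.shape b.shape)
          rw [rem, if_neg (fun h => hashape h.1)]
          rw [List.mem_append]
          left
          rw [List.mem_map]
          exact ⟨(a.inorder.idxOf 1, (del1 a).shape), m1, rfl⟩
        · rw [GT.labels, GT.labels, m2,
            Multiset.erase_cons_tail _ hk,
            Multiset.erase_add_left_pos _ hna]
        · rw [GT.inorder, GT.inorder, m3,
            List.erase_append_left _ hina]
        · exact ⟨rootBelow_del1 hra, hrb, m4, hdb⟩
        · rw [hio]
          show ins (BT.node a.shape b.shape) _ _ = _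
          rw [ins]
          have hlt : a.inorder.idxOf 1 < a.shape.size := by
            rw [← inorder_length_shape]
            exact List.idxOf_lt_length_iff.mpr hina
          rw [if_pos hlt]
          rw [m5]
      · -- the label 1 is in the right subtree
        have hmb : b.labels.count 1 = 1 := by omega
        have hna : (1:ℕ) ∉ a.labels := Multiset.count_eq_zero.mp (by omega)
        have hnb' : (1:ℕ) ∈ b.labels := by rw [← Multiset.count_pos]; omega
        have hinb : (1:ℕ) ∈ b.inorder := by rw [← Multiset.mem_coe, inorder_coe]; exact hnb'
        have hnina : (1:ℕ) ∉ a.inorder := by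
          rw [← Multiset.mem_coe, inorder_coe]; exact hna
        obtain ⟨m1, m2, m3, m4, m5⟩ := ihb hdb hposb hmb
        have hda' : del1 a = a := del1_id a hna
        rw [hda']
        have hio : (GT.node k a b).inorder.idxOf 1
            = a.inorder.length + (b.inorder.idxOf 1 + 1) := by
          rw [GT.inorder, List.idxOf_append_of_notMem hnina,
            List.idxOf_cons_ne _ hk]
        have hbshape : b.shape ≠ BT.leaf := by
          cases b with
          | leaf => simp [GT.labels] at hnb'
          | node _ _ _ => simp [GT.shape]
        have halen : a.inorder.length = a.shape.size := inorder_length_shape a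
        refine ⟨?_, ?_, ?_, ?_, ?_⟩
        · rw [hio]
          show _ ∈ rem (BT.node a.shape b.shape)
          rw [rem, if_neg (fun h => hbshape h.2)]
          rw [List.mem_append]
          right
          rw [List.mem_map]
          refine ⟨(b.inorder.idxOf 1, (del1 b).shape), m1, ?_⟩
          simp only [Prod.mk.injEq]
          constructor
          · omega
          · rfl
        · rw [GT.labels, GT.labels, m2,
            Multiset.erase_cons_tail _ hk,
            Multiset.erase_add_right_pos _ hnb']
        · rw [GT.inorder, GT.inorder, m3,
            List.erase_append_right _ hnina,
            List.erase_cons_tail (by simp [hk])]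
        · exact ⟨hra, rootBelow_del1 hrb, hda, m4⟩
        · rw [hio]
          show ins (BT.node a.shape b.shape) _ _ = _
          rw [ins]
          rw [if_neg (by omega), if_neg (by omega)]
          rw [show a.inorder.length + (b.inorder.idxOf 1 + 1) - a.shape.size - 1
              = b.inorder.idxOf 1 from by omega]
          rw [m5]
-- ===== insertion lemmas =====

lemma ins_rootBelow {t : BT} {i k : ℕ} {M : GT ℕ} (hk : 2 ≤ k) (h : rootBelow k M) :
    rootBelow k (ins t i M) := by
  cases t with
  | leaf => trivial
  | node l r =>
    cases M with
    | leaf =>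
      rw [ins]
      split
      · trivial
      · split
        · show (1:ℕ) < k; omega
        · trivial
    | node m A B =>
      rw [ins]
      split
      · exact h
      · split
        · show (1:ℕ) < k; omega
        · exact h

lemma shape_node_inv {M : GT ℕ} {x y : BT} (h : M.shape = BT.node x y) :
    ∃ k A B, M = GT.node k A B ∧ A.shape = x ∧ B.shape = y := by
  cases M with
  | leaf => exact absurd h (by simp [GT.shape])
  | node k A B =>
    rw [GT.shape] at h
    exact ⟨k, A, B, rfl, (BT.node.injEq _ _ _ _).mp h |>.1, (BT.node.injEq _ _ _ _).mp h |>.2⟩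

lemma ins_main : ∀ (t : BT) (p : ℕ × BT), p ∈ rem t → ∀ M : GT ℕ, M.shape = p.2 →
    (ins t p.1 M).shape = t
    ∧ (ins t p.1 M).labels = 1 ::ₘ M.labels
    ∧ (ins t p.1 M).inorder = M.inorder.take p.1 ++ 1 :: M.inorder.drop p.1
    ∧ ((∀ x ∈ M.labels, 2 ≤ x) → IsDec M → IsDec (ins t p.1 M))
    ∧ ((∀ x ∈ M.labels, 2 ≤ x) → del1 (ins t p.1 M) = M) := by
  intro t
  induction t with
  | leaf => intro p hp; simp [rem] at hp
  | node l r ihl ihr =>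
    intro p hp M hM
    rw [rem] at hp
    by_cases hc : l = BT.leaf ∧ r = BT.leaf
    · rw [if_pos hc] at hp
      obtain ⟨rfl, rfl⟩ := hc
      simp only [List.mem_singleton] at hp
      subst hp
      have hMleaf : M = GT.leaf := shape_leaf_iff.mp hM
      subst hMleaf
      have : ins (BT.node BT.leaf BT.leaf) 0 GT.leaf = GT.node 1 GT.leaf GT.leaf := by
        rw [ins.eq_def]; simp [BT.size]
      rw [this]
      refine ⟨rfl, rfl, rfl, ?_, ?_⟩
      · intro _ _; exact ⟨trivial, trivial, trivial, trivial⟩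
      · intro _; rfl
    · rw [if_neg hc] at hp
      rw [List.mem_append] at hp
      rcases hp with hp | hp
      · -- insertion into the left subtree
        rw [List.mem_map] at hp
        obtain ⟨q, hq, rfl⟩ := hp
        obtain ⟨k, A, B, rfl, hA, hB⟩ := shape_node_inv hM
        have hqlt : q.1 < l.size := rem_lt hq
        have hins : ins (BT.node l r) q.1 (GT.node k A B)
            = GT.node k (ins l q.1 A) B := by
          rw [ins, if_pos hqlt]
        obtain ⟨j1, j2, j3, j4, j5⟩ := ihl q hq A hA
        have hAlen : A.inorder.length = q.2.size := by rw [inorder_length_shape, hA]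
        have hqle : q.1 ≤ A.inorder.length := by
          have := rem_size hq; omega
        refine ⟨?_, ?_, ?_, ?_, ?_⟩
        · rw [hins, GT.shape, j1, hB]
        · rw [hins, GT.labels, GT.labels, j2, Multiset.cons_add, Multiset.cons_swap]
        · rw [hins, GT.inorder, GT.inorder, j3]
          rw [List.take_append_of_le_length hqle, List.drop_append_of_le_length hqle]
          simp
        · intro hlab hdec
          obtain ⟨h1, h2, h3, h4⟩ := hdec
          have hlabA : ∀ x ∈ A.labels, 2 ≤ x := fun x hx => hlab x (by
            simp [GT.labels]; tauto)
          rw [hins]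
          exact ⟨ins_rootBelow (hlab k (by simp [GT.labels])) h1, h2, j4 hlabA h3, h4⟩
        · intro hlab
          have hk2 : 2 ≤ k := hlab k (by simp [GT.labels])
          have hlabA : ∀ x ∈ A.labels, 2 ≤ x := fun x hx => hlab x (by
            simp [GT.labels]; tauto)
          have hnB : (1:ℕ) ∉ B.labels := fun h => by
            have := hlab 1 (by simp [GT.labels]; tauto); omega
          rw [hins, del1, if_neg (by omega), j5 hlabA, del1_id B hnB]
      · -- insertion into the right subtree
        rw [List.mem_map] at hp
        obtain ⟨q, hq, rfl⟩ := hp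
        obtain ⟨k, A, B, rfl, hA, hB⟩ := shape_node_inv hM
        have hAlen : A.inorder.length = l.size := by rw [inorder_length_shape, hA]
        have hins : ins (BT.node l r) (q.1 + l.size + 1) (GT.node k A B)
            = GT.node k A (ins r q.1 B) := by
          rw [ins, if_neg (by omega), if_neg (by omega),
            show q.1 + l.size + 1 - l.size - 1 = q.1 from by omega]
        obtain ⟨j1, j2, j3, j4, j5⟩ := ihr q hq B hB
        refine ⟨?_, ?_, ?_, ?_, ?_⟩
        · rw [hins, GT.shape, j1, hA]
        · rw [hins, GT.labels, GT.labels, j2, Multiset.add_cons, Multiset.cons_swap]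
        · rw [hins, GT.inorder, GT.inorder, j3]
          have e1 : A.inorder ++ k :: B.inorder = (A.inorder ++ [k]) ++ B.inorder := by simp
          have e2 : q.1 + l.size + 1 = (A.inorder ++ [k]).length + q.1 := by
            simp [hAlen]; omega
          rw [e1, e2, List.take_length_add_append, List.drop_length_add_append]
          simp
        · intro hlab hdec
          obtain ⟨h1, h2, h3, h4⟩ := hdec
          have hlabB : ∀ x ∈ B.labels, 2 ≤ x := fun x hx => hlab x (by
            simp [GT.labels]; tauto)
          rw [hins]
          exact ⟨h1, ins_rootBelow (hlab k (by simp [GT.labels])) h2, h3, j4 hlabB h4⟩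
        · intro hlab
          have hk2 : 2 ≤ k := hlab k (by simp [GT.labels])
          have hlabB : ∀ x ∈ B.labels, 2 ≤ x := fun x hx => hlab x (by
            simp [GT.labels]; tauto)
          have hnA : (1:ℕ) ∉ A.labels := fun h => by
            have := hlab 1 (by simp [GT.labels]; tauto); omega
          rw [hins, del1, if_neg (by omega), j5 hlabB, del1_id A hnA]
-- ===== list index lemmas =====

lemma mem_take_iff {α : Type} [DecidableEq α] :
    ∀ (l : List α) (n : ℕ) (a : α), a ∈ l.take n ↔ a ∈ l ∧ l.idxOf a < n := by
  intro l
  induction l with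
  | nil => simp
  | cons x l ih =>
    intro n a
    cases n with
    | zero => simp
    | succ n =>
      by_cases hxa : x = a
      · subst hxa
        simp [List.idxOf_cons_self]
      · rw [List.take_succ_cons]
        simp only [List.mem_cons, ih, List.idxOf_cons_ne _ (fun h => hxa h)]
        constructor
        · rintro (rfl | ⟨h1, h2⟩)
          · exact absurd rfl hxa
          · exact ⟨Or.inr h1, by omega⟩
        · rintro ⟨rfl | h1, h2⟩
          · exact absurd rfl hxa
          · exact Or.inr ⟨h1, by omega⟩

lemma idxOf_map_sub :
    ∀ (l : List ℕ), (∀ y ∈ l, 2 ≤ y) → ∀ x, 2 ≤ x →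
      (l.map (fun z => z - 1)).idxOf (x - 1) = l.idxOf x := by
  intro l
  induction l with
  | nil => intro _ x _; rfl
  | cons a l ih =>
    intro h x hx
    have ha : 2 ≤ a := h a (by simp)
    by_cases hax : a = x
    · subst hax
      simp [List.idxOf_cons_self]
    · rw [List.map_cons, List.idxOf_cons_ne _ (by omega : a - 1 ≠ x - 1),
        List.idxOf_cons_ne _ hax, ih (fun y hy => h y (by simp [hy])) x hx]

lemma erase_idxOf_lt {u v : List ℕ} (hnd : (u ++ 1 :: v).Nodup)
    {x y : ℕ} (hx : x ∈ u ++ 1 :: v) (hy : y ∈ u ++ 1 :: v) (hx1 : x ≠ 1) (hy1 : y ≠ 1) :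
    ((u ++ v).idxOf x < (u ++ v).idxOf y ↔
      (u ++ 1 :: v).idxOf x < (u ++ 1 :: v).idxOf y) := by
  rw [List.nodup_append] at hnd
  obtain ⟨hu, hv, hdisj⟩ := hnd
  have key : ∀ z ∈ u ++ 1 :: v, z ≠ 1 →
      ((u ++ v).idxOf z = u.idxOf z ∧ (u ++ 1 :: v).idxOf z = u.idxOf z
          ∧ u.idxOf z < u.length)
      ∨ ((u ++ v).idxOf z = u.length + v.idxOf z
          ∧ (u ++ 1 :: v).idxOf z = u.length + (v.idxOf z + 1)) := by
    intro z hz hz1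
    rw [List.mem_append] at hz
    rcases hz with hz | hz
    · exact Or.inl ⟨List.idxOf_append_of_mem hz, List.idxOf_append_of_mem hz,
        List.idxOf_lt_length_iff.mpr hz⟩
    · rw [List.mem_cons] at hz
      rcases hz with rfl | hz
      · exact absurd rfl hz1
      · have hzu : z ∉ u := fun hzu => hdisj z hzu z (by simp [hz]) rfl
        refine Or.inr ⟨?_, ?_⟩
        · rw [List.idxOf_append_of_notMem hzu]
        · rw [List.idxOf_append_of_notMem hzu,
            List.idxOf_cons_ne _ (fun h => hz1 h.symm)]
    -- done
  rcases key x hx hx1 with ⟨e1, e2, e3⟩ | ⟨e1, e2⟩ <;>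
    rcases key y hy hy1 with ⟨f1, f2, f3⟩ | ⟨f1, f2⟩ <;> rw [e1, e2, f1, f2] <;> omega

-- ===== facts from the label set =====

lemma labels_facts {L : GT ℕ} {m : ℕ} (h : L.labels = (Multiset.range m).map (· + 1)) :
    L.inorder.Nodup ∧ L.inorder.length = m ∧ (∀ x, x ∈ L.inorder ↔ 1 ≤ x ∧ x ≤ m) := by
  have hco := inorder_coe L
  refine ⟨?_, ?_, ?_⟩
  · rw [← Multiset.coe_nodup, hco, h]
    exact (Multiset.nodup_range m).map (fun a b hab => by omega)
  · have := congrArg Multiset.card hco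
    rw [Multiset.coe_card, h] at this
    simpa using this
  · intro x
    rw [← Multiset.mem_coe, hco, h]
    simp only [Multiset.mem_map, Multiset.mem_range]
    constructor
    · rintro ⟨a, ha, rfl⟩; omega
    · rintro ⟨h1, h2⟩; exact ⟨x - 1, by omega, by omega⟩

lemma code_one {L : GT ℕ} {m : ℕ} (hm : 1 ≤ m) (hnd : L.inorder.Nodup)
    (hlen : L.inorder.length = m) (hmem : ∀ x, x ∈ L.inorder ↔ 1 ≤ x ∧ x ≤ m) :
    codeInv L (m+1) 1 = L.inorder.idxOf 1 := by
  set w := L.inorder with hw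
  set p := w.idxOf 1 with hp
  have h1w : (1:ℕ) ∈ w := (hmem 1).mpr ⟨le_refl 1, hm⟩
  have hplt : p < w.length := List.idxOf_lt_length_iff.mpr h1w
  rw [codeInv]
  have hset : (Finset.Ioc 1 ((m+1) - 1)).filter (fun j => w.idxOf j < w.idxOf 1)
      = (w.take p).toFinset := by
    ext j
    simp only [Finset.mem_filter, Finset.mem_Ioc, List.mem_toFinset, mem_take_iff]
    constructor
    · rintro ⟨⟨hj1, hjm⟩, hidx⟩
      exact ⟨(hmem j).mpr ⟨by omega, by omega⟩, hidx⟩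
    · rintro ⟨hjw, hidx⟩
      have hj := (hmem j).mp hjw
      have hjne : j ≠ 1 := by
        rintro rfl
        omega
      exact ⟨⟨by omega, by omega⟩, hidx⟩
  rw [hset, List.toFinset_card_of_nodup ((List.take_sublist _ _).nodup hnd),
    List.length_take]
  omega

lemma count_one_labels {L : GT ℕ} {m : ℕ} (hm : 1 ≤ m)
    (h : L.labels = (Multiset.range m).map (· + 1)) : L.labels.count 1 = 1 := by
  rw [h]
  have hnd : ((Multiset.range m).map (· + 1)).Nodup :=
    (Multiset.nodup_range m).map (fun a b hab => by omega)
  have hmem : (1:ℕ) ∈ (Multiset.range m).map (· + 1) := by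
    simp only [Multiset.mem_map, Multiset.mem_range]
    exact ⟨0, by omega, rfl⟩
  exact Multiset.count_eq_one_of_mem hnd hmem
-- ===== the monomial factorization =====

lemma mono_split {L : GT ℕ} {m : ℕ} (hm : 1 ≤ m) (hdec : IsDec L)
    (hlab : L.labels = (Multiset.range m).map (· + 1)) :
    (∏ i ∈ Finset.Icc 1 m, (MvPolynomial.X (codeInv L (m+1) i + 1) : MvPolynomial ℕ ℚ))
      = MvPolynomial.X (L.inorder.idxOf 1 + 1) *
        ∏ i ∈ Finset.Icc 1 (m-1),
          (MvPolynomial.X (codeInv ((del1 L).map (fun z => z - 1)) m i + 1)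
            : MvPolynomial ℕ ℚ) := by
  obtain ⟨hnd, hlen, hmem⟩ := labels_facts hlab
  have hpos : ∀ x ∈ L.labels, 1 ≤ x := by
    intro x hx
    rw [← inorder_coe, Multiset.mem_coe] at hx
    exact ((hmem x).mp hx).1
  have hcount := count_one_labels hm hlab
  obtain ⟨m1, m2, m3, m4, m5⟩ := del1_main L hdec hpos hcount
  have h1w : (1:ℕ) ∈ L.inorder := (hmem 1).mpr ⟨le_refl 1, hm⟩
  obtain ⟨u, v, huv⟩ := List.append_of_mem h1w
  have hndu : (u ++ 1 :: v).Nodup := huv ▸ hnd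
  have hu1 : (1:ℕ) ∉ u := by
    rw [List.nodup_append] at hndu
    exact fun h => hndu.2.2 1 h 1 (by simp) rfl
  have hv1 : (1:ℕ) ∉ v := by
    rw [List.nodup_append, List.nodup_cons] at hndu
    exact hndu.2.1.1
  have hp : L.inorder.idxOf 1 = u.length := by
    rw [huv, List.idxOf_append_of_notMem hu1, List.idxOf_cons_self]
    omega
  have herase : (del1 L).inorder = u ++ v := by
    rw [m3, huv, List.erase_append_right _ hu1, List.erase_cons_head]
  have hw'' : ((del1 L).map (fun z => z - 1)).inorder = (u ++ v).map (fun z => z - 1) := by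
    rw [inorder_map, herase]
  have huv2 : ∀ z ∈ u ++ v, 2 ≤ z := by
    intro z hz
    have hz1 : z ≠ 1 := by
      rintro rfl
      rcases List.mem_append.mp hz with h | h
      · exact hu1 h
      · exact hv1 h
    have hzw : z ∈ L.inorder := by
      rw [huv]
      rcases List.mem_append.mp hz with h | h
      · exact List.mem_append.mpr (Or.inl h)
      · exact List.mem_append.mpr (Or.inr (by simp [h]))
    have := (hmem z).mp hzw
    omega
  have hidx2 : ∀ x, 2 ≤ x → x ≤ m → ∀ y, 2 ≤ y → y ≤ m →
      (((del1 L).map (fun z => z - 1)).inorder.idxOf (x-1)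
          < ((del1 L).map (fun z => z - 1)).inorder.idxOf (y-1)
        ↔ L.inorder.idxOf x < L.inorder.idxOf y) := by
    intro x hx2 hxm y hy2 hym
    have hxw : x ∈ L.inorder := (hmem x).mpr ⟨by omega, hxm⟩
    have hyw : y ∈ L.inorder := (hmem y).mpr ⟨by omega, hym⟩
    rw [hw'', idxOf_map_sub _ huv2 _ hx2, idxOf_map_sub _ huv2 _ hy2, huv]
    rw [huv] at hxw hyw
    exact erase_idxOf_lt hndu hxw hyw (by omega) (by omega)
  have step2 : ∀ i' ∈ Finset.Icc 1 (m-1), codeInv L (m+1) (i'+1)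
      = codeInv ((del1 L).map (fun z => z - 1)) m i' := by
    intro i' hi'
    simp only [Finset.mem_Icc] at hi'
    rw [codeInv, codeInv]
    refine Finset.card_bij' (fun j _ => j - 1) (fun j _ => j + 1) ?_ ?_ ?_ ?_
    · intro j hj
      simp only [Finset.mem_filter, Finset.mem_Ioc] at hj ⊢
      obtain ⟨⟨hj1, hj2⟩, hidxj⟩ := hj
      refine ⟨⟨by omega, by omega⟩, ?_⟩
      exact (hidx2 j (by omega) (by omega) (i'+1) (by omega) (by omega)).mpr hidxj
    · intro j hj
      simp only [Finset.mem_filter, Finset.mem_Ioc] at hj ⊢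
      obtain ⟨⟨hj1, hj2⟩, hidxj⟩ := hj
      refine ⟨⟨by omega, by omega⟩, ?_⟩
      exact (hidx2 (j+1) (by omega) (by omega) (i'+1) (by omega) (by omega)).mp hidxj
    · intro j hj
      simp only [Finset.mem_filter, Finset.mem_Ioc] at hj
      omega
    · intro j hj
      simp only [Finset.mem_filter, Finset.mem_Ioc] at hj
      omega
  have hicc : Finset.Icc 1 m = insert 1 (Finset.Icc 2 m) := by
    ext x
    simp only [Finset.mem_Icc, Finset.mem_insert]
    omega
  rw [hicc, Finset.prod_insert (by simp)]
  rw [code_one hm hnd hlen hmem]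
  congr 1
  refine Finset.prod_bij' (fun i _ => i - 1) (fun i _ => i + 1) ?_ ?_ ?_ ?_ ?_
  · intro i hi
    simp only [Finset.mem_Icc] at hi ⊢
    omega
  · intro i hi
    simp only [Finset.mem_Icc] at hi ⊢
    omega
  · intro i hi
    simp only [Finset.mem_Icc] at hi
    omega
  · intro i hi
    simp only [Finset.mem_Icc] at hi
    omega
  · intro i hi
    simp only [Finset.mem_Icc] at hi
    rw [← step2 (i-1) (by simp only [Finset.mem_Icc]; omega),
      show (i-1)+1 = i from by omega]
-- ===== label-set shifting lemmas =====

lemma range_map_core {m : ℕ} (hm : 1 ≤ m) :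
    (Multiset.range m).map (· + 1) = 1 ::ₘ (Multiset.range (m-1)).map (fun x => x + 2) := by
  obtain ⟨k, rfl⟩ : ∃ k, m = k + 1 := ⟨m - 1, by omega⟩
  have h : Multiset.range (k+1) = 0 ::ₘ (Multiset.range k).map Nat.succ := by
    rw [Multiset.range, Multiset.range, List.range_succ_eq_map]
    rfl
  rw [h, Multiset.map_cons, Multiset.map_map]
  rfl

lemma erase_shift {m : ℕ} (hm : 1 ≤ m) :
    (((Multiset.range m).map (· + 1)).erase 1).map (fun z => z - 1)
      = (Multiset.range (m-1)).map (· + 1) := by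
  rw [range_map_core hm, Multiset.erase_cons_head, Multiset.map_map]
  exact Multiset.map_congr rfl (fun x _ => rfl)

lemma shift_cons {m : ℕ} (hm : 1 ≤ m) :
    (1:ℕ) ::ₘ ((Multiset.range (m-1)).map (· + 1)).map (· + 1)
      = (Multiset.range m).map (· + 1) := by
  rw [range_map_core hm, Multiset.map_map]
  rfl

lemma isDec_map_sub : ∀ L : GT ℕ, (∀ x ∈ L.labels, 2 ≤ x) → IsDec L →
    IsDec (L.map (fun z => z - 1)) := by
  intro L
  induction L with
  | leaf => intro _ _; trivial
  | node k a b iha ihb =>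
    intro hlab hdec
    obtain ⟨h1, h2, h3, h4⟩ := hdec
    have hlaba : ∀ x ∈ a.labels, 2 ≤ x := fun x hx => hlab x (by simp [GT.labels]; tauto)
    have hlabb : ∀ x ∈ b.labels, 2 ≤ x := fun x hx => hlab x (by simp [GT.labels]; tauto)
    refine ⟨?_, ?_, iha hlaba h3, ihb hlabb h4⟩
    · cases a with
      | leaf => trivial
      | node m x y =>
        have hm2 : 2 ≤ m := hlaba m (by simp [GT.labels])
        have : m < k := h1
        show m - 1 < k - 1
        omega
    · cases b with
      | leaf => trivial
      | node m x y =>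
        have hm2 : 2 ≤ m := hlabb m (by simp [GT.labels])
        have : m < k := h2
        show m - 1 < k - 1
        omega

lemma isDec_map_add : ∀ L : GT ℕ, IsDec L → IsDec (L.map (· + 1)) := by
  intro L
  induction L with
  | leaf => intro _; trivial
  | node k a b iha ihb =>
    intro hdec
    obtain ⟨h1, h2, h3, h4⟩ := hdec
    refine ⟨?_, ?_, iha h3, ihb h4⟩
    · cases a with
      | leaf => trivial
      | node m x y => show m + 1 < k + 1; exact Nat.succ_lt_succ h1
    · cases b with
      | leaf => trivial
      | node m x y => show m + 1 < k + 1; exact Nat.succ_lt_succ h2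

-- ===== the finite set of decreasing labelings =====

noncomputable def DecFin (t : BT) : Finset (GT ℕ) :=
  (allGT t (t.size + 1)).filter
    (fun L => L.shape = t ∧ IsDec L ∧ L.labels = (Multiset.range t.size).map (· + 1))

lemma mem_DecFin {t : BT} {L : GT ℕ} :
    L ∈ DecFin t ↔
      L.shape = t ∧ IsDec L ∧ L.labels = (Multiset.range t.size).map (· + 1) := by
  rw [DecFin, Finset.mem_filter, mem_allGT]
  constructor
  · rintro ⟨_, h⟩; exact h
  · rintro ⟨h1, h2, h3⟩
    refine ⟨⟨h1, ?_⟩, h1, h2, h3⟩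
    intro x hx
    rw [h3] at hx
    simp only [Multiset.mem_map, Multiset.mem_range] at hx
    omega

noncomputable def MM (t : BT) : MvPolynomial ℕ ℚ :=
  ∑ L ∈ DecFin t, ∏ i ∈ Finset.Icc 1 t.size,
    MvPolynomial.X (codeInv L (t.size + 1) i + 1)

lemma rem_fst_nodup : ∀ t : BT, ((rem t).map Prod.fst).Nodup := by
  intro t
  induction t with
  | leaf => simp [rem]
  | node l r ihl ihr =>
    rw [rem]
    by_cases hc : l = BT.leaf ∧ r = BT.leaf
    · rw [if_pos hc]; simp
    · rw [if_neg hc]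
      rw [List.map_append, List.map_map, List.map_map, List.nodup_append]
      have e1 : (Prod.fst ∘ fun p : ℕ × BT => (p.1, BT.node p.2 r)) = Prod.fst := rfl
      have e2 : (Prod.fst ∘ fun p : ℕ × BT => (p.1 + l.size + 1, BT.node l p.2))
          = (fun x => x + l.size + 1) ∘ Prod.fst := rfl
      rw [e1, e2, ← List.map_map]
      refine ⟨ihl, ihr.map (fun x y hxy => by omega), ?_⟩
      intro x hx y hy
      rw [List.mem_map] at hx hy
      obtain ⟨p, hp, rfl⟩ := hx
      obtain ⟨q, hq, hqeq⟩ := hy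
      rw [List.mem_map] at hq
      obtain ⟨p', hp', rfl⟩ := hq
      have hb := rem_lt hp
      omega

lemma rem_nodup (t : BT) : (rem t).Nodup := (rem_fst_nodup t).of_map _

-- ===== Lemma B : the recursion for MM =====

lemma lemB {t : BT} (ht : t ≠ BT.leaf) :
    MM t = ((rem t).map (fun p => MvPolynomial.X (p.1 + 1) * MM p.2)).sum := by
  obtain ⟨l, r, rfl⟩ : ∃ l r, t = BT.node l r := by
    cases t with
    | leaf => exact absurd rfl ht
    | node l r => exact ⟨l, r, rfl⟩
  set t := BT.node l r with htdef
  have hm : 1 ≤ t.size := by rw [htdef, BT.size]; omega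
  set m := t.size with hmsize
  -- the fiber map
  set φ : GT ℕ → ℕ × BT := fun L => (L.inorder.idxOf 1, (del1 L).shape) with hφ
  have hmaps : ∀ L ∈ DecFin t, φ L ∈ (rem t).toFinset := by
    intro L hL
    obtain ⟨h1, h2, h3⟩ := mem_DecFin.mp hL
    have hpos : ∀ x ∈ L.labels, 1 ≤ x := by
      intro x hx; rw [h3] at hx
      simp only [Multiset.mem_map, Multiset.mem_range] at hx
      omega
    have := (del1_main L h2 hpos (count_one_labels hm h3)).1
    rw [h1] at this
    exact List.mem_toFinset.mpr this
  rw [← List.sum_toFinset _ (rem_nodup t), MM]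
  rw [← Finset.sum_fiberwise_of_maps_to hmaps]
  refine Finset.sum_congr rfl (fun p hp => ?_)
  have hprem : p ∈ rem t := List.mem_toFinset.mp hp
  have hpsz : p.2.size + 1 = m := rem_size hprem
  have hplt : p.1 < m := rem_lt hprem
  -- fiberwise bijection
  rw [MM, Finset.mul_sum]
  refine Finset.sum_bij' (fun L _ => (del1 L).map (fun z => z - 1))
    (fun L' _ => ins t p.1 (L'.map (· + 1))) ?_ ?_ ?_ ?_ ?_
  · -- forward membership
    intro L hL
    rw [Finset.mem_filter] at hL
    obtain ⟨hL1, hL2⟩ := hL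
    obtain ⟨h1, h2, h3⟩ := mem_DecFin.mp hL1
    have hpos : ∀ x ∈ L.labels, 1 ≤ x := by
      intro x hx; rw [h3] at hx
      simp only [Multiset.mem_map, Multiset.mem_range] at hx
      omega
    obtain ⟨m1, m2, m3, m4, m5⟩ := del1_main L h2 hpos (count_one_labels hm h3)
    have hlab2 : ∀ x ∈ (del1 L).labels, 2 ≤ x := by
      intro x hx
      rw [m2] at hx
      have hx1 : x ≠ 1 := by
        rintro rfl
        have := Multiset.count_erase_self 1 L.labels
        rw [count_one_labels hm h3] at this
        rw [← Multiset.count_pos, this] at hx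
        omega
      have := hpos x (Multiset.mem_of_mem_erase hx)
      omega
    rw [mem_DecFin]
    refine ⟨?_, ?_, ?_⟩
    · rw [shape_map]
      have := congrArg Prod.snd hL2
      exact this
    · exact isDec_map_sub _ hlab2 m4
    · rw [labels_map, m2, h3]
      rw [show p.2.size = m - 1 from by omega]
      exact erase_shift hm
  · -- backward membership
    intro L' hL'
    obtain ⟨h1, h2, h3⟩ := mem_DecFin.mp hL'
    have hshape : (L'.map (· + 1)).shape = p.2 := by rw [shape_map, h1]
    obtain ⟨j1, j2, j3, j4, j5⟩ := ins_main t p hprem (L'.map (· + 1)) hshape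
    have hlab2 : ∀ x ∈ (L'.map (· + 1)).labels, 2 ≤ x := by
      intro x hx
      rw [labels_map, h3] at hx
      simp only [Multiset.mem_map, Multiset.mem_range] at hx
      omega
    rw [Finset.mem_filter]
    constructor
    · rw [mem_DecFin]
      refine ⟨j1, j4 hlab2 (isDec_map_add _ h2), ?_⟩
      rw [j2, labels_map, h3]
      rw [show p.2.size = m - 1 from by omega]
      exact shift_cons hm
    · -- the fiber map value
      have hwlen : (L'.map (· + 1)).inorder.length = p.2.size := by
        rw [inorder_length_shape, hshape]
      have h1notin : (1:ℕ) ∉ (L'.map (· + 1)).inorder := by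
        intro hmem1
        rw [← Multiset.mem_coe, inorder_coe] at hmem1
        have := hlab2 1 hmem1
        omega
      have hdel : del1 (ins t p.1 (L'.map (· + 1))) = L'.map (· + 1) := j5 hlab2
      have hfst : (ins t p.1 (L'.map (· + 1))).inorder.idxOf 1 = p.1 := by
        rw [j3, List.idxOf_append_of_notMem
          (fun hmem1 => h1notin (List.mem_of_mem_take hmem1)),
          List.idxOf_cons_self, List.length_take]
        omega
      rw [hφ]
      show (_, _) = p
      rw [hfst, hdel, hshape]
  · -- left inverse
    intro L hL
    rw [Finset.mem_filter] at hL
    obtain ⟨hL1, hL2⟩ := hL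
    obtain ⟨h1, h2, h3⟩ := mem_DecFin.mp hL1
    have hpos : ∀ x ∈ L.labels, 1 ≤ x := by
      intro x hx; rw [h3] at hx
      simp only [Multiset.mem_map, Multiset.mem_range] at hx
      omega
    obtain ⟨m1, m2, m3, m4, m5⟩ := del1_main L h2 hpos (count_one_labels hm h3)
    have hlab2 : ∀ x ∈ (del1 L).labels, 2 ≤ x := by
      intro x hx
      rw [m2] at hx
      have hx1 : x ≠ 1 := by
        rintro rfl
        have hcnt := Multiset.count_erase_self 1 L.labels
        rw [count_one_labels hm h3] at hcnt
        rw [← Multiset.count_pos, hcnt] at hx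
        omega
      have := hpos x (Multiset.mem_of_mem_erase hx)
      omega
    have hidx : L.inorder.idxOf 1 = p.1 := congrArg Prod.fst hL2
    rw [gtmap_map, gtmap_congr_id _ (del1 L) (fun x hx => by
      have := hlab2 x hx
      show x - 1 + 1 = x
      omega)]
    rw [← hidx, ← h1]
    exact m5
  · -- right inverse
    intro L' hL'
    obtain ⟨h1, h2, h3⟩ := mem_DecFin.mp hL'
    have hshape : (L'.map (· + 1)).shape = p.2 := by rw [shape_map, h1]
    obtain ⟨j1, j2, j3, j4, j5⟩ := ins_main t p hprem (L'.map (· + 1)) hshape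
    have hlab2 : ∀ x ∈ (L'.map (· + 1)).labels, 2 ≤ x := by
      intro x hx
      rw [labels_map, h3] at hx
      simp only [Multiset.mem_map, Multiset.mem_range] at hx
      omega
    rw [j5 hlab2, gtmap_map, gtmap_congr_id _ L' (fun x hx => by
      show x + 1 - 1 = x
      omega)]
  · -- the summand identity
    intro L hL
    rw [Finset.mem_filter] at hL
    obtain ⟨hL1, hL2⟩ := hL
    obtain ⟨h1, h2, h3⟩ := mem_DecFin.mp hL1
    have hidx : L.inorder.idxOf 1 = p.1 := congrArg Prod.fst hL2
    rw [mono_split hm h2 h3, hidx,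
      show p.2.size + 1 = m from by omega,
      show p.2.size = m - 1 from by omega]

-- ===== Lemma C and the main theorem =====

lemma DecFin_leaf : DecFin BT.leaf = {GT.leaf} := by
  ext L
  rw [mem_DecFin]
  cases L with
  | leaf => simp [GT.shape, GT.labels, IsDec, BT.size]
  | node k a b => simp [GT.shape, GT.labels, BT.size]

lemma lemC : ∀ N t, BT.size t ≤ N → MM t = t.polyAux 1 1 := by
  intro N
  induction N with
  | zero =>
    intro t ht
    have : t = BT.leaf := by
      cases t with
      | leaf => rfl
      | node l r => simp [BT.size] at ht
    subst this
    rw [MM, DecFin_leaf]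
    simp [BT.polyAux, BT.size]
  | succ N ih =>
    intro t ht
    by_cases hleaf : t = BT.leaf
    · subst hleaf
      rw [MM, DecFin_leaf]
      simp [BT.polyAux, BT.size]
    · rw [lemB hleaf]
      have hA := lemA t 1 1 (le_refl 1) (by norm_num)
      have hz : t.polyAux (1 - 1) 1 = 0 := by
        obtain ⟨l, r, rfl⟩ : ∃ l r, t = BT.node l r := by
          cases t with
          | leaf => exact absurd rfl hleaf
          | node l r => exact ⟨l, r, rfl⟩
        exact polyAux_zero l r 0 1 (by norm_num)
      rw [hz, add_zero] at hA
      rw [hA]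
      refine congrArg List.sum (List.map_congr_left (fun p hp => ?_))
      have hsz := rem_size hp
      have : MM p.2 = p.2.polyAux 1 1 := ih p.2 (by omega)
      rw [this, show (1:ℤ).toNat + p.1 = p.1 + 1 from by omega]

/-- for an indexed tree `T` with support `{1,…,n-1}`,
`β_T = Σ_{ℓ ∈ Dec(T)} ∏_{i=1}^{n-1} x_{c_i(ℓ⁻¹) + 1}` where the sum is over
decreasing labelings of `T` with labels exactly `{1,…,n-1}` and `c(ℓ⁻¹)` is the
Lehmer code of the inverse of the inorder permutation `ℓ`. -/
theorem forest_poly_codes (n : ℕ) (hn : 1 ≤ n) (t : BT) (ht : t.size = n - 1) :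
    t.poly 1
      = ∑ᶠ L ∈ {L : GT ℕ | L.shape = t ∧ IsDec L ∧
            L.labels = (Multiset.range (n - 1)).map (· + 1)},
          ∏ i ∈ Finset.Icc 1 (n - 1),
            (MvPolynomial.X (codeInv L n i + 1) : MvPolynomial ℕ ℚ) := by
  have hset : {L : GT ℕ | L.shape = t ∧ IsDec L ∧
      L.labels = (Multiset.range (n - 1)).map (· + 1)} = ↑(DecFin t) := by
    ext L
    rw [Set.mem_setOf_eq, Finset.mem_coe, mem_DecFin, ht]
  rw [hset, finsum_mem_coe_finset]
  rw [BT.poly, ← lemC t.size t le_rfl, MM]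
  refine Finset.sum_congr rfl (fun L hL => ?_)
  rw [ht, show n - 1 + 1 = n from by omega]
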